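/- The function h : (−1, ∞) → ℝ defined by h(x) = (log(1+x) − x)/(x²/2) for x ≠ 0 and h(0) = −1 is monotonically increasing on (−1, ∞): for all −1 < x ≤ y, h(x) ≤ h(y). -/

import Mathlib

namespace RLFA

/-- The function `h(x) = (log(1+x) − x)/(x²/2)` for `x ≠ 0`, continuously extended by
`h(0) = −1`. -/
noncomputable def hFun (x : ℝ) : ℝ :=
  if x = 0 then -1 else (Real.log (1 + x) - x) / (x ^ 2 / 2)

noncomputable def phi (x : ℝ) : ℝ := (Real.log (1 + x) - x) / (x ^ 2 / 2)

noncomputable def gF (x : ℝ) : ℝ := 2*x - x^2/(1+x) - 2*Real.log (1+x)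

noncomputable def FF (x : ℝ) : ℝ := Real.log (1+x) - x + x^2/2

lemma hasDerivAt_log1p {x : ℝ} (hx : -1 < x) :
    HasDerivAt (fun t => Real.log (1+t)) (1/(1+x)) x := by
  have h1 : (0:ℝ) < 1 + x := by linarith
  have := (Real.hasDerivAt_log h1.ne').comp x ((hasDerivAt_id x).const_add 1)
  simpa [one_div, Function.comp_def] using this

lemma hasDerivAt_FF {x : ℝ} (hx : -1 < x) :
    HasDerivAt FF (x^2/(1+x)) x := by
  have h1 : (0:ℝ) < 1 + x := by linarith
  have h : HasDerivAt FF (1/(1+x) - 1 + x) x := by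
    have := ((hasDerivAt_log1p hx).sub (hasDerivAt_id x)).add
      (((hasDerivAt_pow 2 x).div_const 2))
    show HasDerivAt (fun t => Real.log (1+t) - t + t^2/2) _ x
    simpa [FF, Pi.add_def, Pi.sub_def, funext_iff] using this.congr_deriv (by push_cast; ring)
  have : (1/(1+x) - 1 + x) = x^2/(1+x) := by field_simp; ring
  rwa [this] at h

lemma FF_mono : MonotoneOn FF (Set.Ioi (-1:ℝ)) := by
  apply monotoneOn_of_deriv_nonneg (convex_Ioi _)
  · exact fun t ht => ((hasDerivAt_FF ht).continuousAt).continuousWithinAt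
  · intro t ht
    rw [interior_Ioi] at ht
    exact (hasDerivAt_FF ht).differentiableAt.differentiableWithinAt
  · intro t ht
    rw [interior_Ioi] at ht
    rw [(hasDerivAt_FF ht).deriv]
    have h1 : (0:ℝ) < 1 + t := by linarith [Set.mem_Ioi.mp ht]
    positivity

lemma hasDerivAt_gF {x : ℝ} (hx : -1 < x) :
    HasDerivAt gF (x^2/(1+x)^2) x := by
  have h1 : (0:ℝ) < 1 + x := by linarith
  have hd : HasDerivAt (fun t => t^2/(1+t)) ((2*x*(1+x) - x^2*1)/(1+x)^2) x := by
    have := (hasDerivAt_pow 2 x).div ((hasDerivAt_id x).const_add 1) h1.ne'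
    simpa [Pi.div_def] using this.congr_deriv (by simp only [id_eq]; ring)
  have h : HasDerivAt gF (2 - (2*x*(1+x) - x^2*1)/(1+x)^2 - 2*(1/(1+x))) x := by
    have := (((hasDerivAt_id x).const_mul 2).sub hd).sub
      ((hasDerivAt_log1p hx).const_mul 2)
    show HasDerivAt (fun t => 2*t - t^2/(1+t) - 2*Real.log (1+t)) _ x
    simpa [gF, Pi.sub_def, funext_iff] using this.congr_deriv (by push_cast; ring)
  have : (2 - (2*x*(1+x) - x^2*1)/(1+x)^2 - 2*(1/(1+x))) = x^2/(1+x)^2 := by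
    field_simp; ring
  rwa [this] at h

lemma gF_mono : MonotoneOn gF (Set.Ioi (-1:ℝ)) := by
  apply monotoneOn_of_deriv_nonneg (convex_Ioi _)
  · exact fun t ht => ((hasDerivAt_gF ht).continuousAt).continuousWithinAt
  · intro t ht
    rw [interior_Ioi] at ht
    exact (hasDerivAt_gF ht).differentiableAt.differentiableWithinAt
  · intro t ht
    rw [interior_Ioi] at ht
    rw [(hasDerivAt_gF ht).deriv]
    have h1 : (0:ℝ) < 1 + t := by linarith [Set.mem_Ioi.mp ht]
    positivity

lemma hasDerivAt_phi {x : ℝ} (hx : -1 < x) (hx0 : x ≠ 0) :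
    HasDerivAt phi (2 * gF x / x^3) x := by
  have h1 : (0:ℝ) < 1 + x := by linarith
  have hv : (x^2/2 : ℝ) ≠ 0 := by positivity
  have hu : HasDerivAt (fun t => Real.log (1+t) - t) (1/(1+x) - 1) x :=
    (hasDerivAt_log1p hx).sub (hasDerivAt_id x)
  have hv' : HasDerivAt (fun t : ℝ => t^2/2) x x := by
    have := (hasDerivAt_pow 2 x).div_const 2
    simpa using this.congr_deriv (by push_cast; ring)
  have h := hu.div hv' hv
  have : ((1/(1+x) - 1) * (x^2/2) - (Real.log (1+x) - x) * x) / (x^2/2)^2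
      = 2 * gF x / x^3 := by
    unfold gF
    field_simp
    ring
  rwa [this] at h

lemma phi_mono_neg : MonotoneOn phi (Set.Ioo (-1:ℝ) 0) := by
  apply monotoneOn_of_deriv_nonneg (convex_Ioo _ _)
  · intro t ht
    exact ((hasDerivAt_phi ht.1 (ne_of_lt ht.2)).continuousAt).continuousWithinAt
  · intro t ht
    rw [interior_Ioo] at ht
    exact (hasDerivAt_phi ht.1 (ne_of_lt ht.2)).differentiableAt.differentiableWithinAt
  · intro t ht
    rw [interior_Ioo] at ht
    rw [(hasDerivAt_phi ht.1 (ne_of_lt ht.2)).deriv]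
    have hg : gF t ≤ 0 := by
      have h0 : gF 0 = 0 := by simp [gF]
      have := gF_mono (Set.mem_Ioi.mpr ht.1) (Set.mem_Ioi.mpr (by norm_num : (-1:ℝ) < 0))
        (le_of_lt ht.2)
      linarith [this.trans_eq h0]
    have h2 : (0:ℝ) < t^2 := by
      have : t ≠ 0 := ne_of_lt ht.2
      positivity
    have ht3 : t^3 < 0 := by nlinarith [ht.2]
    rw [div_nonneg_iff]
    right
    exact ⟨by linarith, le_of_lt ht3⟩

lemma phi_mono_pos : MonotoneOn phi (Set.Ioi (0:ℝ)) := by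
  apply monotoneOn_of_deriv_nonneg (convex_Ioi _)
  · intro t ht
    have ht' : (0:ℝ) < t := ht
    exact ((hasDerivAt_phi (by linarith) (ne_of_gt ht')).continuousAt).continuousWithinAt
  · intro t ht
    rw [interior_Ioi] at ht
    have ht' : (0:ℝ) < t := ht
    exact (hasDerivAt_phi (by linarith) (ne_of_gt ht')).differentiableAt.differentiableWithinAt
  · intro t ht
    rw [interior_Ioi] at ht
    have ht' : (0:ℝ) < t := ht
    rw [(hasDerivAt_phi (by linarith) (ne_of_gt ht')).deriv]
    have hg : 0 ≤ gF t := by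
      have h0 : gF 0 = 0 := by simp [gF]
      have := gF_mono (Set.mem_Ioi.mpr (by norm_num : (-1:ℝ) < 0))
        (Set.mem_Ioi.mpr (by linarith : (-1:ℝ) < t)) (le_of_lt ht')
      linarith [h0 ▸ this]
    have ht3 : (0:ℝ) < t^3 := by positivity
    positivity

lemma phi_le_neg_one {x : ℝ} (hx : -1 < x) (hx0 : x < 0) : phi x ≤ -1 := by
  have hF : FF x ≤ 0 := by
    have h0 : FF 0 = 0 := by simp [FF]
    have := FF_mono (Set.mem_Ioi.mpr hx) (Set.mem_Ioi.mpr (by norm_num : (-1:ℝ) < 0))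
      (le_of_lt hx0)
    linarith [this.trans_eq h0]
  have hx2 : (0:ℝ) < x^2/2 := by
    have : x ≠ 0 := ne_of_lt hx0
    positivity
  rw [phi, div_le_iff₀ hx2]
  unfold FF at hF
  linarith

lemma neg_one_le_phi {y : ℝ} (hy : 0 < y) : -1 ≤ phi y := by
  have hF : 0 ≤ FF y := by
    have h0 : FF 0 = 0 := by simp [FF]
    have := FF_mono (Set.mem_Ioi.mpr (by norm_num : (-1:ℝ) < 0))
      (Set.mem_Ioi.mpr (by linarith : (-1:ℝ) < y)) (le_of_lt hy)
    linarith [h0 ▸ this]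
  have hy2 : (0:ℝ) < y^2/2 := by positivity
  rw [phi, le_div_iff₀ hy2]
  unfold FF at hF
  linarith

/-- The function `h : (−1, ∞) → ℝ` defined by
`h(x) = (log(1+x) − x)/(x²/2)` for `x ≠ 0` and `h(0) = −1` is monotonically increasing on
`(−1, ∞)`: for all `−1 < x ≤ y`, `h(x) ≤ h(y)`. -/
theorem statement18 (x y : ℝ) (hx : -1 < x) (hxy : x ≤ y) : hFun x ≤ hFun y := by
  rcases lt_trichotomy x 0 with hx0 | hx0 | hx0
  · rw [show hFun x = phi x from if_neg (ne_of_lt hx0)]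
    rcases lt_trichotomy y 0 with hy0 | hy0 | hy0
    · rw [show hFun y = phi y from if_neg (ne_of_lt hy0)]
      exact phi_mono_neg ⟨hx, hx0⟩ ⟨lt_of_lt_of_le hx hxy, hy0⟩ hxy
    · rw [hy0, show hFun 0 = -1 from if_pos rfl]
      exact phi_le_neg_one hx hx0
    · rw [show hFun y = phi y from if_neg (ne_of_gt hy0)]
      exact le_trans (phi_le_neg_one hx hx0) (neg_one_le_phi hy0)
  · subst hx0
    rw [show hFun 0 = -1 from if_pos rfl]
    rcases eq_or_lt_of_le hxy with hy0 | hy0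
    · rw [← hy0, show hFun 0 = -1 from if_pos rfl]
    · rw [show hFun y = phi y from if_neg (ne_of_gt hy0)]
      exact neg_one_le_phi hy0
  · have hy0 : 0 < y := lt_of_lt_of_le hx0 hxy
    rw [show hFun x = phi x from if_neg (ne_of_gt hx0),
        show hFun y = phi y from if_neg (ne_of_gt hy0)]
    exact phi_mono_pos hx0 hy0 hxy

end RLFA
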